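/- For the matrix A = (7 8 9 10) ∈ ℤ^{1×4}, the moves (−1,2,−1,0), (−1,1,1,−1), (0,−1,2,−1), and (3,1,−1,−2) are indispensable: each corresponding binomial belongs (up to sign) to every minimal Markov basis of I_A. -/

import Mathlib

open MvPolynomial

def natToInt {n : ℕ} (u : Fin n → ℕ) : Fin n → ℤ := fun i => (u i : ℤ)

def posPart {n : ℕ} (u : Fin n → ℤ) : Fin n → ℕ := fun i => (u i).toNat

def negPart {n : ℕ} (u : Fin n → ℤ) : Fin n → ℕ := fun i => (-(u i)).toNat

/-- `A` is a configuration matrix: `ker(A) ∩ ℕⁿ = {0}`. -/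
def IsConfiguration {d n : ℕ} (A : Matrix (Fin d) (Fin n) ℤ) : Prop :=
  ∀ u : Fin n → ℕ, A.mulVec (natToInt u) = 0 → u = 0

/-- The monomial `x^u` for `u ∈ ℕⁿ`. -/
noncomputable def natMonomial (k : Type*) [Field k] {n : ℕ} (u : Fin n → ℕ) :
    MvPolynomial (Fin n) k :=
  monomial (Finsupp.equivFunOnFinite.symm u) 1

/-- The toric ideal `I_A`, generated by the binomials `x^u - x^v` with `Au = Av`. -/
noncomputable def toricIdeal (k : Type*) [Field k] {d n : ℕ} (A : Matrix (Fin d) (Fin n) ℤ) :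
    Ideal (MvPolynomial (Fin n) k) :=
  Ideal.span { p | ∃ u v : Fin n → ℕ,
    A.mulVec (natToInt u) = A.mulVec (natToInt v) ∧
    p = natMonomial k u - natMonomial k v }

/-- The binomial `x^{u⁺} - x^{u⁻}` associated to a move `u ∈ ℤⁿ`. -/
noncomputable def moveBinomial (k : Type*) [Field k] {n : ℕ} (u : Fin n → ℤ) :
    MvPolynomial (Fin n) k :=
  natMonomial k (posPart u) - natMonomial k (negPart u)

/-- `M ⊆ ker(A)` is a Markov basis if its binomials generate the toric ideal. -/
def IsMarkovBasis (k : Type*) [Field k] {d n : ℕ} (A : Matrix (Fin d) (Fin n) ℤ)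
    (M : Set (Fin n → ℤ)) : Prop :=
  (∀ u ∈ M, A.mulVec u = 0) ∧ Ideal.span (moveBinomial k '' M) = toricIdeal k A

/-- A minimal Markov basis is an inclusion-minimal Markov basis. -/
def IsMinimalMarkovBasis (k : Type*) [Field k] {d n : ℕ} (A : Matrix (Fin d) (Fin n) ℤ)
    (M : Set (Fin n → ℤ)) : Prop :=
  IsMarkovBasis k A M ∧ ∀ M' ⊂ M, ¬ IsMarkovBasis k A M'

lemma pos_sub_neg_eq {n : ℕ} (w : Fin n → ℤ) :
    natToInt (_root_.posPart w) - natToInt (_root_.negPart w) = w := by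
  funext i
  simp only [natToInt, _root_.posPart, _root_.negPart, Pi.sub_apply]
  omega

lemma key_indispensable {d n : ℕ} (k : Type*) [Field k] (A : Matrix (Fin d) (Fin n) ℤ)
    (M : Set (Fin n → ℤ)) (hM : IsMarkovBasis k A M) (w : Fin n → ℤ) (hw0 : w ≠ 0)
    (hker : A.mulVec w = 0)
    (hfib : ∀ u : Fin n → ℕ,
      A.mulVec (natToInt u) = A.mulVec (natToInt (_root_.posPart w)) →
      u = _root_.posPart w ∨ u = _root_.negPart w) :
    w ∈ M ∨ -w ∈ M := by
  by_contra hcon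
  push_neg at hcon
  obtain ⟨hw, hnw⟩ := hcon
  have hAw : A.mulVec (natToInt (_root_.posPart w)) = A.mulVec (natToInt (_root_.negPart w)) := by
    have h2 : A.mulVec (natToInt (_root_.posPart w) - natToInt (_root_.negPart w)) = 0 := by
      rw [pos_sub_neg_eq]; exact hker
    rw [Matrix.mulVec_sub] at h2
    exact sub_eq_zero.mp h2
  have hp : moveBinomial k w ∈ Ideal.span (moveBinomial k '' M) := by
    rw [hM.2]
    exact Ideal.subset_span ⟨_root_.posPart w, _root_.negPart w, hAw, rfl⟩
  set U : (Fin n →₀ ℕ) := Finsupp.equivFunOnFinite.symm (_root_.posPart w) with hU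
  -- main claim
  have hzero : ∀ q ∈ Ideal.span (moveBinomial k '' M),
      ∀ f : MvPolynomial (Fin n) k, coeff U (f * q) = 0 := by
    intro q hq
    induction hq using Submodule.span_induction with
    | mem x hx =>
      obtain ⟨w', hw'M, rfl⟩ := hx
      intro f
      by_cases hw'0 : w' = 0
      · subst hw'0
        have h00 : _root_.posPart (0 : Fin n → ℤ) = _root_.negPart 0 := by
          funext i; simp [_root_.posPart, _root_.negPart]
        have : moveBinomial k (0 : Fin n → ℤ) = 0 := by
          rw [moveBinomial, h00, sub_self]
        rw [this, mul_zero, coeff_zero]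
      · have hle1 : ¬ (Finsupp.equivFunOnFinite.symm (_root_.posPart w') ≤ U) := by
          intro hle
          rw [Finsupp.le_def] at hle
          simp only [hU, Finsupp.coe_equivFunOnFinite_symm] at hle
          set m : Fin n → ℕ := fun i => _root_.posPart w i - _root_.posPart w' i + _root_.negPart w' i with hm
          have hAm : A.mulVec (natToInt m) = A.mulVec (natToInt (_root_.posPart w)) := by
            have heq : natToInt m = natToInt (_root_.posPart w) - w' := by
              funext i
              have := hle i
              simp only [natToInt, hm, Pi.sub_apply, _root_.posPart, _root_.negPart] at *
              omega
            rw [heq, Matrix.mulVec_sub, hM.1 w' hw'M, sub_zero]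
          rcases hfib m hAm with h | h
          · apply hw'0
            funext i
            have h1 := congrFun h i
            have h2 := hle i
            simp only [hm, _root_.posPart, _root_.negPart] at h1 h2
            simp only [Pi.zero_apply]
            omega
          · apply hw
            have : w' = w := by
              funext i
              have h1 := congrFun h i
              have h2 := hle i
              simp only [hm, _root_.posPart, _root_.negPart] at h1 h2
              omega
            rwa [this] at hw'M
        have hle2 : ¬ (Finsupp.equivFunOnFinite.symm (_root_.negPart w') ≤ U) := by
          intro hle
          rw [Finsupp.le_def] at hle
          simp only [hU, Finsupp.coe_equivFunOnFinite_symm] at hle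
          set m : Fin n → ℕ := fun i => _root_.posPart w i - _root_.negPart w' i + _root_.posPart w' i with hm
          have hAm : A.mulVec (natToInt m) = A.mulVec (natToInt (_root_.posPart w)) := by
            have heq : natToInt m = natToInt (_root_.posPart w) + w' := by
              funext i
              have := hle i
              simp only [natToInt, hm, Pi.add_apply, _root_.posPart, _root_.negPart] at *
              omega
            rw [heq, Matrix.mulVec_add, hM.1 w' hw'M, add_zero]
          rcases hfib m hAm with h | h
          · apply hw'0
            funext i
            have h1 := congrFun h i
            have h2 := hle i
            simp only [hm, _root_.posPart, _root_.negPart] at h1 h2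
            simp only [Pi.zero_apply]
            omega
          · apply hnw
            have : w' = -w := by
              funext i
              have h1 := congrFun h i
              have h2 := hle i
              simp only [hm, _root_.posPart, _root_.negPart, Pi.neg_apply] at h1 h2 ⊢
              omega
            rwa [this] at hw'M
        rw [moveBinomial, natMonomial, natMonomial, mul_sub, coeff_sub,
          coeff_mul_monomial', coeff_mul_monomial', if_neg hle1, if_neg hle2, sub_zero]
    | zero => intro f; rw [mul_zero, coeff_zero]
    | add x y hx hy ihx ihy =>
      intro f
      rw [mul_add, coeff_add, ihx f, ihy f, add_zero]
    | smul a x hx ih =>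
      intro f
      rw [smul_eq_mul, ← mul_assoc]
      exact ih (f * a)
  have hfin := hzero _ hp 1
  rw [one_mul] at hfin
  have hVU : Finsupp.equivFunOnFinite.symm (_root_.negPart w) ≠ U := by
    rw [hU]
    intro h
    apply hw0
    have h' := Finsupp.equivFunOnFinite.symm.injective h
    funext i
    have := congrFun h' i
    simp only [_root_.posPart, _root_.negPart] at this
    simp only [Pi.zero_apply]
    omega
  rw [moveBinomial, natMonomial, natMonomial, coeff_sub, coeff_monomial, coeff_monomial,
    if_pos rfl, if_neg hVU, sub_zero] at hfin
  exact one_ne_zero hfin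

/-- for `A = (7 8 9 10)`, the moves `(-1,2,-1,0)`, `(-1,1,1,-1)`,
`(0,-1,2,-1)` and `(3,1,-1,-2)` are indispensable: each belongs, up to sign, to every
minimal Markov basis of `I_A`. -/
theorem indispensables_7891011 (k : Type*) [Field k]
    (M : Set (Fin 4 → ℤ))
    (hM : IsMinimalMarkovBasis k (!![7, 8, 9, 10] : Matrix (Fin 1) (Fin 4) ℤ) M) :
    ∀ w ∈ ({![-1, 2, -1, 0], ![-1, 1, 1, -1], ![0, -1, 2, -1],
        ![3, 1, -1, -2]} : Set (Fin 4 → ℤ)), w ∈ M ∨ -w ∈ M := by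
  obtain ⟨hMB, -⟩ := hM
  have hmv : ∀ x : Fin 4 → ℤ, (!![7, 8, 9, 10] : Matrix (Fin 1) (Fin 4) ℤ).mulVec x
      = fun _ => 7 * x 0 + 8 * x 1 + 9 * x 2 + 10 * x 3 := by
    intro x
    funext i
    fin_cases i
    simp [Matrix.mulVec, dotProduct, Fin.sum_univ_four]
    try ring
  intro w hw
  simp only [Set.mem_insert_iff, Set.mem_singleton_iff] at hw
  rcases hw with rfl | rfl | rfl | rfl
  · refine key_indispensable k _ M hMB _ ?_ ?_ ?_
    · intro h; have := congrFun h 1; simp at this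
    · rw [hmv]; funext i
      show (7 * _ + 8 * _ + 9 * _ + 10 * _ : ℤ) = 0
      norm_num [Matrix.cons_val_two, Matrix.cons_val_three, Matrix.vecHead, Matrix.vecTail]
    · intro u hu
      rw [hmv, hmv] at hu
      have h := congrFun hu 0
      simp only [natToInt, _root_.posPart] at h
      norm_num [Matrix.cons_val_two, Matrix.cons_val_three, Matrix.vecHead, Matrix.vecTail] at h
      have ha : u 0 ≤ 2 := by omega
      have hb : u 1 ≤ 2 := by omega
      have hc : u 2 ≤ 1 := by omega
      have hd : u 3 ≤ 1 := by omega
      have hres : (u 0 = 0 ∧ u 1 = 2 ∧ u 2 = 0 ∧ u 3 = 0) ∨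
          (u 0 = 1 ∧ u 1 = 0 ∧ u 2 = 1 ∧ u 3 = 0) := by
        clear hu
        interval_cases h0 : u 0 <;> interval_cases h1 : u 1 <;>
          interval_cases h2 : u 2 <;> interval_cases h3 : u 3 <;> omega
      rcases hres with ⟨h0, h1, h2, h3⟩ | ⟨h0, h1, h2, h3⟩
      · left; funext i; fin_cases i <;> simp [_root_.posPart, h0, h1, h2, h3]
      · right; funext i; fin_cases i <;> simp [_root_.negPart, h0, h1, h2, h3]
  · refine key_indispensable k _ M hMB _ ?_ ?_ ?_
    · intro h; have := congrFun h 1; simp at this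
    · rw [hmv]; funext i
      show (7 * _ + 8 * _ + 9 * _ + 10 * _ : ℤ) = 0
      norm_num [Matrix.cons_val_two, Matrix.cons_val_three, Matrix.vecHead, Matrix.vecTail]
    · intro u hu
      rw [hmv, hmv] at hu
      have h := congrFun hu 0
      simp only [natToInt, _root_.posPart] at h
      norm_num [Matrix.cons_val_two, Matrix.cons_val_three, Matrix.vecHead, Matrix.vecTail] at h
      have ha : u 0 ≤ 2 := by omega
      have hb : u 1 ≤ 2 := by omega
      have hc : u 2 ≤ 1 := by omega
      have hd : u 3 ≤ 1 := by omega
      have hres : (u 0 = 0 ∧ u 1 = 1 ∧ u 2 = 1 ∧ u 3 = 0) ∨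
          (u 0 = 1 ∧ u 1 = 0 ∧ u 2 = 0 ∧ u 3 = 1) := by
        clear hu
        interval_cases h0 : u 0 <;> interval_cases h1 : u 1 <;>
          interval_cases h2 : u 2 <;> interval_cases h3 : u 3 <;> omega
      rcases hres with ⟨h0, h1, h2, h3⟩ | ⟨h0, h1, h2, h3⟩
      · left; funext i; fin_cases i <;> simp [_root_.posPart, h0, h1, h2, h3]
      · right; funext i; fin_cases i <;> simp [_root_.negPart, h0, h1, h2, h3]
  · refine key_indispensable k _ M hMB _ ?_ ?_ ?_
    · intro h; have := congrFun h 2; simp at this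
    · rw [hmv]; funext i
      show (7 * _ + 8 * _ + 9 * _ + 10 * _ : ℤ) = 0
      norm_num [Matrix.cons_val_two, Matrix.cons_val_three, Matrix.vecHead, Matrix.vecTail]
    · intro u hu
      rw [hmv, hmv] at hu
      have h := congrFun hu 0
      simp only [natToInt, _root_.posPart] at h
      norm_num [Matrix.cons_val_two, Matrix.cons_val_three, Matrix.vecHead, Matrix.vecTail] at h
      have ha : u 0 ≤ 2 := by omega
      have hb : u 1 ≤ 2 := by omega
      have hc : u 2 ≤ 2 := by omega
      have hd : u 3 ≤ 1 := by omega
      have hres : (u 0 = 0 ∧ u 1 = 0 ∧ u 2 = 2 ∧ u 3 = 0) ∨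
          (u 0 = 0 ∧ u 1 = 1 ∧ u 2 = 0 ∧ u 3 = 1) := by
        clear hu
        interval_cases h0 : u 0 <;> interval_cases h1 : u 1 <;>
          interval_cases h2 : u 2 <;> interval_cases h3 : u 3 <;> omega
      rcases hres with ⟨h0, h1, h2, h3⟩ | ⟨h0, h1, h2, h3⟩
      · left; funext i; fin_cases i <;> simp [_root_.posPart, h0, h1, h2, h3]
      · right; funext i; fin_cases i <;> simp [_root_.negPart, h0, h1, h2, h3]
  · refine key_indispensable k _ M hMB _ ?_ ?_ ?_
    · intro h; have := congrFun h 0; simp at this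
    · rw [hmv]; funext i
      show (7 * _ + 8 * _ + 9 * _ + 10 * _ : ℤ) = 0
      norm_num [Matrix.cons_val_two, Matrix.cons_val_three, Matrix.vecHead, Matrix.vecTail]
    · intro u hu
      rw [hmv, hmv] at hu
      have h := congrFun hu 0
      simp only [natToInt, _root_.posPart] at h
      norm_num [Matrix.cons_val_two, Matrix.cons_val_three, Matrix.vecHead, Matrix.vecTail] at h
      have ha : u 0 ≤ 4 := by omega
      have hb : u 1 ≤ 3 := by omega
      have hc : u 2 ≤ 3 := by omega
      have hd : u 3 ≤ 2 := by omega
      have hres : (u 0 = 3 ∧ u 1 = 1 ∧ u 2 = 0 ∧ u 3 = 0) ∨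
          (u 0 = 0 ∧ u 1 = 0 ∧ u 2 = 1 ∧ u 3 = 2) := by
        clear hu
        interval_cases h0 : u 0 <;> interval_cases h1 : u 1 <;>
          interval_cases h2 : u 2 <;> interval_cases h3 : u 3 <;> omega
      rcases hres with ⟨h0, h1, h2, h3⟩ | ⟨h0, h1, h2, h3⟩
      · left; funext i; fin_cases i <;> simp [_root_.posPart, h0, h1, h2, h3]
      · right; funext i; fin_cases i <;> simp [_root_.negPart, h0, h1, h2, h3]
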